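/- For each k ≥ 3, the group P(k) = ⟨a,b,c | a³ = b³ = c^{3^{k−2}} = [a,c] = [b,c] = 1, [a,b] = c^{3^{k−3}}⟩ has order 3^k, has center containing ⟨c⟩ of order 3^{k−2}, and has rank 2 (i.e., contains no subgroup isomorphic to Z/3 × Z/3 × Z/3). -/

import Mathlib

open FreeGroup

/-- The relators of
`P(k) = ⟨a,b,c | a³ = b³ = c^(3^(k-2)) = [a,c] = [b,c] = 1, [a,b] = c^(3^(k-3))⟩`,
with generators `a = of 0`, `b = of 1`, `c = of 2`. -/
def Prels (k : ℕ) : Set (FreeGroup (Fin 3)) :=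
  let a : FreeGroup (Fin 3) := FreeGroup.of 0
  let b : FreeGroup (Fin 3) := FreeGroup.of 1
  let c : FreeGroup (Fin 3) := FreeGroup.of 2
  {a ^ 3, b ^ 3, c ^ 3 ^ (k - 2), a⁻¹ * c⁻¹ * a * c, b⁻¹ * c⁻¹ * b * c,
   (a⁻¹ * b⁻¹ * a * b) * (c ^ 3 ^ (k - 3))⁻¹}

/-- The group `P(k)`. -/
def P (k : ℕ) : Type := PresentedGroup (Prels k)

instance (k : ℕ) : Group (P k) := by unfold P; infer_instance

namespace PkAux

/-- additive embedding `ZMod 3 → ZMod (3^(m+1))` sending `x` to `3^m * x`. -/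
def eps (m : ℕ) (x : ZMod 3) : ZMod (3 ^ (m + 1)) := (x.val : ZMod (3 ^ (m + 1))) * 3 ^ m

lemma eps_key (m : ℕ) (a : ℕ) :
    ((a % 3 : ℕ) : ZMod (3 ^ (m + 1))) * 3 ^ m = (a : ZMod (3 ^ (m + 1))) * 3 ^ m := by
  conv_rhs => rw [← Nat.mod_add_div a 3]
  push_cast
  have h3 : (3 : ZMod (3 ^ (m + 1))) * 3 ^ m = 0 := by
    rw [← pow_succ']
    exact_mod_cast ZMod.natCast_self (3 ^ (m + 1))
  rw [add_mul, mul_assoc, mul_left_comm, h3]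
  ring

lemma eps_add (m : ℕ) (x y : ZMod 3) : eps m (x + y) = eps m x + eps m y := by
  unfold eps
  rw [ZMod.val_add, eps_key]
  push_cast
  ring

lemma eps_zero (m : ℕ) : eps m 0 = 0 := by simp [eps]

lemma eps_neg (m : ℕ) (x : ZMod 3) : eps m (-x) = -eps m x := by
  have := eps_add m x (-x)
  simp only [add_neg_cancel, eps_zero] at this
  linear_combination -this

lemma eps_one (m : ℕ) : eps m 1 = (3 ^ m : ZMod (3 ^ (m + 1))) := by
  simp [eps, ZMod.val_one]

/-- The model group of order `3 ^ (m + 3)`. -/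
@[ext]
structure M (m : ℕ) where
  x : ZMod 3
  y : ZMod 3
  z : ZMod (3 ^ (m + 1))

instance (m : ℕ) : Mul (M m) :=
  ⟨fun g h => ⟨g.x + h.x, g.y + h.y, g.z + h.z + eps m (g.x * h.y)⟩⟩

instance (m : ℕ) : One (M m) := ⟨⟨0, 0, 0⟩⟩

instance (m : ℕ) : Inv (M m) := ⟨fun g => ⟨-g.x, -g.y, -g.z + eps m (g.x * g.y)⟩⟩

lemma M.mul_def {m : ℕ} (g h : M m) :
    g * h = ⟨g.x + h.x, g.y + h.y, g.z + h.z + eps m (g.x * h.y)⟩ := rfl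

lemma M.one_def {m : ℕ} : (1 : M m) = ⟨0, 0, 0⟩ := rfl

lemma M.inv_def {m : ℕ} (g : M m) : g⁻¹ = ⟨-g.x, -g.y, -g.z + eps m (g.x * g.y)⟩ := rfl

instance (m : ℕ) : Group (M m) where
  mul_assoc g h k := by
    simp only [M.mul_def]
    ext <;> simp only []
    · ring
    · ring
    · rw [add_mul, mul_add, eps_add, eps_add]; ring
  one_mul g := by simp only [M.mul_def, M.one_def]; ext <;> simp [eps_zero]
  mul_one g := by simp only [M.mul_def, M.one_def]; ext <;> simp [eps_zero]
  inv_mul_cancel g := by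
    simp only [M.mul_def, M.inv_def, M.one_def]
    ext <;> simp only []
    · ring
    · ring
    · rw [neg_mul, eps_neg]; ring

section
variable {m : ℕ}

def A : M m := ⟨1, 0, 0⟩
def B : M m := ⟨0, 1, 0⟩
def C : M m := ⟨0, 0, 1⟩

lemma Apow (i : ℕ) : (A : M m) ^ i = ⟨(i : ZMod 3), 0, 0⟩ := by
  induction i with
  | zero => simp [M.one_def]
  | succ n ih => rw [pow_succ, ih, M.mul_def]; ext <;> simp [A, eps_zero]

lemma Bpow (j : ℕ) : (B : M m) ^ j = ⟨0, (j : ZMod 3), 0⟩ := by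
  induction j with
  | zero => simp [M.one_def]
  | succ n ih => rw [pow_succ, ih, M.mul_def]; ext <;> simp [B, eps_zero]

lemma Cpow (l : ℕ) : (C : M m) ^ l = ⟨0, 0, (l : ZMod (3 ^ (m + 1)))⟩ := by
  induction l with
  | zero => simp [M.one_def]
  | succ n ih => rw [pow_succ, ih, M.mul_def]; ext <;> simp [C, eps_zero]

def Mequiv : M m ≃ (ZMod 3 × ZMod 3 × ZMod (3 ^ (m + 1))) where
  toFun g := (g.x, g.y, g.z)
  invFun p := ⟨p.1, p.2.1, p.2.2⟩
  left_inv _ := rfl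
  right_inv _ := rfl

lemma card_M : Nat.card (M m) = 3 ^ (m + 3) := by
  rw [Nat.card_congr (Mequiv (m := m))]
  simp only [Nat.card_prod, Nat.card_zmod]
  ring

instance : Finite (M m) := Finite.of_equiv _ (Mequiv (m := m)).symm

def chi : Multiplicative (ZMod (3 ^ (m + 1))) →* M m where
  toFun z := ⟨0, 0, z.toAdd⟩
  map_one' := by simp [M.one_def]
  map_mul' z w := by rw [M.mul_def]; ext <;> simp [eps_zero]

lemma orderOf_C : orderOf (C : M m) = 3 ^ (m + 1) := by
  have hinj : Function.Injective (chi (m := m)) := by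
    intro z w h
    simpa [chi, M.mk.injEq] using congrArg M.z h
  have hC : (C : M m) = chi (Multiplicative.ofAdd (1 : ZMod (3 ^ (m + 1)))) := rfl
  rw [hC, orderOf_injective _ hinj]
  simpa using ZMod.addOrderOf_one (3 ^ (m + 1))

lemma hA3 : (A : M m) ^ 3 = 1 := by
  rw [Apow, M.one_def]; ext <;> simp <;> decide

lemma hB3 : (B : M m) ^ 3 = 1 := by
  rw [Bpow, M.one_def]; ext <;> simp <;> decide

lemma hCn : (C : M m) ^ 3 ^ (m + 1) = 1 := by
  rw [Cpow, M.one_def]; norm_num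

lemma hAC : (A : M m)⁻¹ * (C : M m)⁻¹ * A * C = 1 := by
  simp only [M.mul_def, M.inv_def, M.one_def, A, C]
  ext <;> simp [eps_zero, eps_neg]

lemma hBC : (B : M m)⁻¹ * (C : M m)⁻¹ * B * C = 1 := by
  simp only [M.mul_def, M.inv_def, M.one_def, B, C]
  ext <;> simp [eps_zero, eps_neg]

lemma hABC : ((A : M m)⁻¹ * (B : M m)⁻¹ * A * B) * ((C : M m) ^ 3 ^ m)⁻¹ = 1 := by
  rw [Cpow]
  simp only [M.mul_def, M.inv_def, M.one_def, A, B]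
  ext <;> simp [eps_zero, eps_neg, eps_one]

def f0 : Fin 3 → M m := ![A, B, C]

lemma hrels : ∀ r ∈ Prels (m + 3), FreeGroup.lift (f0 (m := m)) r = 1 := by
  intro r hr
  have e2 : m + 3 - 2 = m + 1 := rfl
  have e3 : m + 3 - 3 = m := rfl
  simp only [Prels, e2, e3, Set.mem_insert_iff, Set.mem_singleton_iff] at hr
  rcases hr with rfl | rfl | rfl | rfl | rfl | rfl <;>
    simp only [f0, _root_.map_mul, _root_.map_inv, map_pow, FreeGroup.lift_apply_of,
      Matrix.cons_val_zero, Matrix.cons_val_one, Matrix.head_cons, Matrix.cons_val_two,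
      Matrix.tail_cons]
  · exact hA3
  · exact hB3
  · exact hCn
  · exact hAC
  · exact hBC
  · exact hABC

noncomputable def phi : PresentedGroup (Prels (m + 3)) →* M m := PresentedGroup.toGroup hrels

lemma phi_a : phi (PresentedGroup.of (rels := Prels (m + 3)) 0) = (A : M m) :=
  PresentedGroup.toGroup.of hrels
lemma phi_b : phi (PresentedGroup.of (rels := Prels (m + 3)) 1) = (B : M m) :=
  PresentedGroup.toGroup.of hrels
lemma phi_c : phi (PresentedGroup.of (rels := Prels (m + 3)) 2) = (C : M m) :=
  PresentedGroup.toGroup.of hrels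

end



section PSide
variable {m : ℕ}

/-- Abbreviation for the presented group. -/
abbrev PG (m : ℕ) := PresentedGroup (Prels (m + 3))

def pa : PG m := PresentedGroup.of 0
def pb : PG m := PresentedGroup.of 1
def pc : PG m := PresentedGroup.of 2

lemma relP (r : FreeGroup (Fin 3)) (hr : r ∈ Prels (m + 3)) :
    PresentedGroup.mk (Prels (m + 3)) r = 1 :=
  (QuotientGroup.eq_one_iff r).mpr (Subgroup.subset_normalClosure hr)

lemma mem1 : (FreeGroup.of 0 : FreeGroup (Fin 3)) ^ 3 ∈ Prels (m + 3) := by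
  simp [Prels]

lemma mem2 : (FreeGroup.of 1 : FreeGroup (Fin 3)) ^ 3 ∈ Prels (m + 3) := by
  simp [Prels]

lemma mem3 : (FreeGroup.of 2 : FreeGroup (Fin 3)) ^ 3 ^ (m + 1) ∈ Prels (m + 3) := by
  have e2 : m + 3 - 2 = m + 1 := rfl
  simp [Prels, e2]

lemma mem4 : ((FreeGroup.of 0)⁻¹ * (FreeGroup.of 2)⁻¹ * FreeGroup.of 0 *
    (FreeGroup.of 2 : FreeGroup (Fin 3))) ∈ Prels (m + 3) := by
  simp [Prels]

lemma mem5 : ((FreeGroup.of 1)⁻¹ * (FreeGroup.of 2)⁻¹ * FreeGroup.of 1 *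
    (FreeGroup.of 2 : FreeGroup (Fin 3))) ∈ Prels (m + 3) := by
  simp [Prels]

lemma mem6 : (((FreeGroup.of 0)⁻¹ * (FreeGroup.of 1)⁻¹ * FreeGroup.of 0 * FreeGroup.of 1) *
    ((FreeGroup.of 2 : FreeGroup (Fin 3)) ^ 3 ^ m)⁻¹) ∈ Prels (m + 3) := by
  have e3 : m + 3 - 3 = m := rfl
  simp [Prels, e3]

lemma pa3 : (pa : PG m) ^ 3 = 1 := by
  have h := relP (m := m) _ mem1
  rwa [map_pow] at h

lemma pb3 : (pb : PG m) ^ 3 = 1 := by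
  have h := relP (m := m) _ mem2
  rwa [map_pow] at h

lemma pcn : (pc : PG m) ^ 3 ^ (m + 1) = 1 := by
  have h := relP (m := m) _ mem3
  rwa [map_pow] at h

lemma comm_ca : (pc : PG m) * pa = pa * pc := by
  have h0 := relP (m := m) _ mem4
  rw [_root_.map_mul, _root_.map_mul, _root_.map_mul, _root_.map_inv, _root_.map_inv] at h0
  have h : (pa : PG m)⁻¹ * pc⁻¹ * pa * pc = 1 := h0
  calc (pc : PG m) * pa = (pa * pc) * ((pa)⁻¹ * (pc)⁻¹ * pa * pc)⁻¹ := by group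
    _ = pa * pc := by rw [h, inv_one, mul_one]

lemma comm_cb : (pc : PG m) * pb = pb * pc := by
  have h0 := relP (m := m) _ mem5
  rw [_root_.map_mul, _root_.map_mul, _root_.map_mul, _root_.map_inv, _root_.map_inv] at h0
  have h : (pb : PG m)⁻¹ * pc⁻¹ * pb * pc = 1 := h0
  calc (pc : PG m) * pb = (pb * pc) * ((pb)⁻¹ * (pc)⁻¹ * pb * pc)⁻¹ := by group
    _ = pb * pc := by rw [h, inv_one, mul_one]

lemma hab : (pa : PG m) * pb = pb * pa * pc ^ 3 ^ m := by
  have h0 := relP (m := m) _ mem6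
  rw [_root_.map_mul, _root_.map_mul, _root_.map_mul, _root_.map_mul, _root_.map_inv,
    _root_.map_inv, _root_.map_inv, map_pow] at h0
  rw [mul_inv_eq_one] at h0
  have h : (pa : PG m)⁻¹ * pb⁻¹ * pa * pb = pc ^ 3 ^ m := h0
  calc (pa : PG m) * pb = (pb * pa) * ((pa)⁻¹ * (pb)⁻¹ * pa * pb) := by group
    _ = pb * pa * pc ^ 3 ^ m := by rw [h]

lemma central (g : PG m) : g * pc = pc * g := by
  have hg : g ∈ Subgroup.centralizer {(pc : PG m)} := by
    apply PresentedGroup.generated_by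
    intro j
    rw [Subgroup.mem_centralizer_iff]
    intro h hh
    rw [Set.mem_singleton_iff] at hh
    subst hh
    fin_cases j
    · exact comm_ca
    · exact comm_cb
    · rfl
  exact (Subgroup.mem_centralizer_iff.mp hg pc rfl).symm

lemma centralpow (g : PG m) (l : ℕ) : g * pc ^ l = pc ^ l * g :=
  (Commute.pow_right (central g).symm.symm l : _)

lemma cinv_pow (l : ℕ) : ((pc : PG m) ^ l)⁻¹ = pc ^ ((3 ^ (m + 1) - 1) * l) := by
  apply inv_eq_of_mul_eq_one_right
  rw [← pow_add]
  have h1 : l ≤ 3 ^ (m + 1) * l := Nat.le_mul_of_pos_left l (by positivity)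
  have : l + (3 ^ (m + 1) - 1) * l = 3 ^ (m + 1) * l := by
    rw [Nat.sub_mul, one_mul]
    omega
  rw [this, pow_mul, pcn, one_pow]

/-- the exponent in the `ba = ab c^w` relation. -/
def wexp (m : ℕ) : ℕ := (3 ^ (m + 1) - 1) * 3 ^ m

lemma hba : (pb : PG m) * pa = pa * pb * pc ^ wexp m := by
  have : (pb : PG m) * pa = (pa * pb) * (pc ^ 3 ^ m)⁻¹ := by
    rw [hab]; group
  rwa [cinv_pow] at this

lemma s1 (i : ℕ) : (pb : PG m) * pa ^ i = pa ^ i * pb * pc ^ (wexp m * i) := by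
  induction i with
  | zero => simp
  | succ n ih =>
    calc pb * pa ^ (n + 1)
        = (pb * pa ^ n) * pa := by rw [pow_succ, mul_assoc]
      _ = pa ^ n * pb * pc ^ (wexp m * n) * pa := by rw [ih]
      _ = pa ^ n * pb * (pc ^ (wexp m * n) * pa) := by group
      _ = pa ^ n * pb * (pa * pc ^ (wexp m * n)) := by rw [← centralpow pa (wexp m * n)]
      _ = pa ^ n * (pb * pa) * pc ^ (wexp m * n) := by group
      _ = pa ^ n * (pa * pb * pc ^ wexp m) * pc ^ (wexp m * n) := by rw [hba]
      _ = (pa ^ n * pa) * pb * (pc ^ wexp m * pc ^ (wexp m * n)) := by group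
      _ = pa ^ (n + 1) * pb * pc ^ (wexp m * (n + 1)) := by
          have he : wexp m + wexp m * n = wexp m * (n + 1) := by ring
          rw [← pow_succ, ← pow_add, he]

/-- normal form predicate -/
def NF (g : PG m) : Prop := ∃ i j l : ℕ, g = pa ^ i * pb ^ j * pc ^ l

lemma NF_one : NF (1 : PG m) := ⟨0, 0, 0, by simp⟩

lemma stepApow (s : ℕ) {g : PG m} (h : NF g) : NF (pa ^ s * g) := by
  obtain ⟨i, j, l, rfl⟩ := h
  exact ⟨s + i, j, l, by rw [pow_add]; group⟩

lemma stepB {g : PG m} (h : NF g) : NF (pb * g) := by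
  obtain ⟨i, j, l, rfl⟩ := h
  refine ⟨i, j + 1, wexp m * i + l, ?_⟩
  calc pb * (pa ^ i * pb ^ j * pc ^ l)
      = (pb * pa ^ i) * (pb ^ j * pc ^ l) := by group
    _ = (pa ^ i * pb * pc ^ (wexp m * i)) * (pb ^ j * pc ^ l) := by rw [s1]
    _ = pa ^ i * pb * (pc ^ (wexp m * i) * pb ^ j) * pc ^ l := by group
    _ = pa ^ i * pb * (pb ^ j * pc ^ (wexp m * i)) * pc ^ l := by
        rw [← centralpow (pb ^ j) (wexp m * i)]
    _ = pa ^ i * (pb * pb ^ j) * (pc ^ (wexp m * i) * pc ^ l) := by group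
    _ = pa ^ i * pb ^ (j + 1) * pc ^ (wexp m * i + l) := by
        rw [← pow_succ', ← pow_add]

lemma stepCpow (s : ℕ) {g : PG m} (h : NF g) : NF (pc ^ s * g) := by
  obtain ⟨i, j, l, rfl⟩ := h
  refine ⟨i, j, l + s, ?_⟩
  calc pc ^ s * (pa ^ i * pb ^ j * pc ^ l)
      = (pa ^ i * pb ^ j) * (pc ^ l * pc ^ s) := by
        rw [← centralpow (pa ^ i * pb ^ j * pc ^ l) s]; group
    _ = pa ^ i * pb ^ j * pc ^ (l + s) := by rw [← pow_add]

lemma painv : (pa : PG m)⁻¹ = pa ^ 2 := by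
  apply inv_eq_of_mul_eq_one_right
  rw [← pow_succ']
  exact pa3

lemma pbinv : (pb : PG m)⁻¹ = pb ^ 2 := by
  apply inv_eq_of_mul_eq_one_right
  rw [← pow_succ']
  exact pb3

lemma NF_all (g : PG m) : NF g := by
  have hg : g ∈ Subgroup.closure (Set.range (PresentedGroup.of : Fin 3 → PG m)) := by
    rw [PresentedGroup.closure_range_of]; trivial
  induction hg using Subgroup.closure_induction_left with
  | one => exact NF_one
  | mul_left x hx y hy ih =>
    obtain ⟨t, rfl⟩ := hx
    fin_cases t
    · simpa [pa] using stepApow 1 ih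
    · exact stepB ih
    · simpa [pc] using stepCpow 1 ih
  | inv_mul_cancel x hx y hy ih =>
    obtain ⟨t, rfl⟩ := hx
    fin_cases t
    · show NF ((pa : PG m)⁻¹ * y)
      rw [painv]
      exact stepApow 2 ih
    · show NF ((pb : PG m)⁻¹ * y)
      rw [pbinv, pow_two, mul_assoc]
      exact stepB (stepB ih)
    · show NF ((pc : PG m)⁻¹ * y)
      rw [show (pc : PG m)⁻¹ = pc ^ (3 ^ (m + 1) - 1) by simpa using cinv_pow 1]
      exact stepCpow _ ih

end PSide


section Final
variable {m : ℕ}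

lemma phi_nf (i j l : ℕ) :
    phi (pa ^ i * pb ^ j * pc ^ l : PG m) = A ^ i * B ^ j * C ^ l := by
  simp only [_root_.map_mul, map_pow, pa, pb, pc, phi_a, phi_b, phi_c]

lemma val_cast_self (x : ZMod 3) : ((x.val : ℕ) : ZMod 3) = x := by
  simp [ZMod.natCast_val, ZMod.cast_id]

lemma val_cast_self' (x : ZMod (3 ^ (m + 1))) : ((x.val : ℕ) : ZMod (3 ^ (m + 1))) = x := by
  simp [ZMod.natCast_val, ZMod.cast_id]

lemma phi_surj : Function.Surjective (phi : PG m →* M m) := by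
  intro g
  refine ⟨pa ^ g.x.val * pb ^ g.y.val * pc ^ (g.z - eps m (g.x * g.y)).val, ?_⟩
  rw [phi_nf, Apow, Bpow, Cpow, M.mul_def, M.mul_def]
  ext
  · simp [val_cast_self]
  · simp [val_cast_self]
  · simp only [val_cast_self, val_cast_self']
    simp [eps_zero]

def Ffin : Fin 3 × Fin 3 × Fin (3 ^ (m + 1)) → PG m :=
  fun t => pa ^ (t.1 : ℕ) * pb ^ (t.2.1 : ℕ) * pc ^ (t.2.2 : ℕ)

lemma Ffin_surj : Function.Surjective (Ffin (m := m)) := by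
  intro g
  obtain ⟨i, j, l, rfl⟩ := NF_all g
  have hp : 0 < 3 ^ (m + 1) := by positivity
  refine ⟨⟨⟨i % 3, by omega⟩, ⟨j % 3, by omega⟩, ⟨l % 3 ^ (m + 1), Nat.mod_lt _ hp⟩⟩, ?_⟩
  simp only [Ffin]
  rw [← pow_eq_pow_mod i pa3, ← pow_eq_pow_mod j pb3, ← pow_eq_pow_mod l pcn]

instance : Finite (PG m) := Finite.of_surjective _ (Ffin_surj (m := m))

lemma card_PG : Nat.card (PG m) = 3 ^ (m + 3) := by
  apply le_antisymm
  · have h := Nat.card_le_card_of_surjective _ (Ffin_surj (m := m))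
    simpa [Nat.card_eq_fintype_card, pow_succ] using h.trans_eq (by
      simp [Nat.card_eq_fintype_card]
      ring)
  · have h := Nat.card_le_card_of_surjective _ (phi_surj (m := m))
    rwa [card_M] at h

lemma phi_bij : Function.Bijective (phi : PG m →* M m) :=
  (Nat.bijective_iff_surjective_and_card _).mpr ⟨phi_surj, by rw [card_PG, card_M]⟩

lemma orderOf_pc : orderOf (pc : PG m) = 3 ^ (m + 1) := by
  rw [← orderOf_injective phi phi_bij.injective pc,
    show phi (pc : PG m) = C from phi_c, orderOf_C]

/-- the abelianization-type homomorphism -/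
def f1 : Fin 3 → Multiplicative (ZMod 3 × ZMod 3) :=
  ![Multiplicative.ofAdd (1, 0), Multiplicative.ofAdd (0, 1), 1]

lemma hrels1 : ∀ r ∈ Prels (m + 3), FreeGroup.lift (f1 : Fin 3 → _) r = 1 := by
  intro r hr
  have e2 : m + 3 - 2 = m + 1 := rfl
  have e3 : m + 3 - 3 = m := rfl
  simp only [Prels, e2, e3, Set.mem_insert_iff, Set.mem_singleton_iff] at hr
  rcases hr with rfl | rfl | rfl | rfl | rfl | rfl <;>
    simp only [f1, _root_.map_mul, _root_.map_inv, map_pow, FreeGroup.lift_apply_of,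
      Matrix.cons_val_zero, Matrix.cons_val_one, Matrix.head_cons, Matrix.cons_val_two,
      Matrix.tail_cons, one_pow, inv_one, mul_one] <;>
    decide

def psi : PG m →* Multiplicative (ZMod 3 × ZMod 3) := PresentedGroup.toGroup hrels1

lemma psi_a : psi (pa : PG m) = Multiplicative.ofAdd (1, 0) := PresentedGroup.toGroup.of hrels1
lemma psi_b : psi (pb : PG m) = Multiplicative.ofAdd (0, 1) := PresentedGroup.toGroup.of hrels1
lemma psi_c : psi (pc : PG m) = 1 := PresentedGroup.toGroup.of hrels1

lemma psi_nf (i j l : ℕ) :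
    psi (pa ^ i * pb ^ j * pc ^ l : PG m) =
      Multiplicative.ofAdd ((i : ZMod 3), (j : ZMod 3)) := by
  rw [_root_.map_mul, _root_.map_mul, map_pow, map_pow, map_pow, psi_a, psi_b, psi_c,
    one_pow, mul_one, ← ofAdd_nsmul, ← ofAdd_nsmul, ← ofAdd_add]
  congr 1
  ext
  · simp [nsmul_eq_mul]
  · simp [nsmul_eq_mul]

lemma ker_psi {g : PG m} (hg : psi g = 1) : g ∈ Subgroup.zpowers (pc : PG m) := by
  obtain ⟨i, j, l, rfl⟩ := NF_all g
  rw [psi_nf, ofAdd_eq_one, Prod.mk_eq_zero] at hg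
  obtain ⟨q1, hq1⟩ := (ZMod.natCast_eq_zero_iff i 3).mp hg.1
  obtain ⟨q2, hq2⟩ := (ZMod.natCast_eq_zero_iff j 3).mp hg.2
  have h1 : (pa : PG m) ^ i = 1 := by rw [hq1, pow_mul, pa3, one_pow]
  have h2 : (pb : PG m) ^ j = 1 := by rw [hq2, pow_mul, pb3, one_pow]
  rw [h1, h2, one_mul, one_mul]
  exact Subgroup.pow_mem _ (Subgroup.mem_zpowers pc) l

lemma no_big_abelian (H : Subgroup (PG m))
    (e : H ≃* Multiplicative (ZMod 3 × ZMod 3 × ZMod 3)) : False := by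
  classical
  have pow3T : ∀ x : Multiplicative (ZMod 3 × ZMod 3 × ZMod 3), x ^ 3 = 1 := by decide
  have hexp : ∀ h : H, h ^ 3 = 1 := fun h => e.injective (by rw [_root_.map_pow, pow3T, _root_.map_one])
  have cardH : Nat.card H = 27 := by
    rw [Nat.card_congr e.toEquiv]
    simp [Nat.card_eq_fintype_card]
  set ψ' : H →* Multiplicative (ZMod 3 × ZMod 3) := psi.comp H.subtype with hpsi'
  -- the kernel of ψ' has at most 3 elements
  have hker_le : Nat.card ψ'.ker ≤ 3 := by
    set Z := Subgroup.zpowers (pc : PG m) with hZ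
    letI : Fintype Z := Fintype.ofFinite Z
    haveI : IsCyclic Z := by
      refine ⟨⟨⟨pc, Subgroup.mem_zpowers pc⟩, fun x => ?_⟩⟩
      obtain ⟨k, hk⟩ := x.2
      exact ⟨k, by ext; simpa using hk⟩
    have hmap : ∀ κ : ψ'.ker, ((κ : H) : PG m) ∈ Z := by
      intro κ
      exact ker_psi (κ.2 : ψ' (κ : H) = 1)
    set θ : ψ'.ker → {z : Z // z ^ 3 = 1} := fun κ =>
      ⟨⟨((κ : H) : PG m), hmap κ⟩, by
        ext
        push_cast
        have h3 := hexp (κ : H)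
        have := congrArg (Subtype.val : H → PG m) h3
        simpa using this⟩ with hθ
    have θinj : Function.Injective θ := by
      intro x y hxy
      have : ((x : H) : PG m) = ((y : H) : PG m) := congrArg (fun t => t.1.1) hxy
      exact Subtype.ext (Subtype.ext this)
    have h1 : Nat.card ψ'.ker ≤ Nat.card {z : Z // z ^ 3 = 1} :=
      Nat.card_le_card_of_injective θ θinj
    have h2 : Nat.card {z : Z // z ^ 3 = 1} ≤ 3 := by
      rw [Nat.card_eq_fintype_card, Fintype.card_subtype]
      exact IsCyclic.card_pow_eq_one_le (by norm_num)
    omega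
  have hkpos : 0 < Nat.card ψ'.ker := Nat.card_pos
  have hq : Nat.card H = Nat.card ψ'.range * Nat.card ψ'.ker := by
    rw [Subgroup.card_eq_card_quotient_mul_card_subgroup ψ'.ker]
    congr 1
    exact Nat.card_congr (QuotientGroup.quotientKerEquivRange ψ').toEquiv
  have hle : Nat.card ψ'.range ≤ 9 := by
    have h := Subgroup.card_le_card_group ψ'.range
    have : Nat.card (Multiplicative (ZMod 3 × ZMod 3)) = 9 := by
      simp [Nat.card_eq_fintype_card]
    omega
  have h3 : 27 ≤ Nat.card ψ'.range * 3 := by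
    rw [cardH] at hq
    calc 27 = Nat.card ψ'.range * Nat.card ψ'.ker := hq
      _ ≤ Nat.card ψ'.range * 3 := Nat.mul_le_mul_left _ hker_le
  have hrange : Nat.card ψ'.range = 9 := by omega
  have htop : ψ'.range = ⊤ := by
    apply Subgroup.eq_top_of_card_eq
    rw [hrange]
    simp [Nat.card_eq_fintype_card]
  have hmem1 : Multiplicative.ofAdd ((1 : ZMod 3), (0 : ZMod 3)) ∈ ψ'.range := by
    rw [htop]; trivial
  have hmem2 : Multiplicative.ofAdd ((0 : ZMod 3), (1 : ZMod 3)) ∈ ψ'.range := by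
    rw [htop]; trivial
  obtain ⟨h₁, hh₁⟩ := hmem1
  obtain ⟨h₂, hh₂⟩ := hmem2
  obtain ⟨i1, j1, l1, hn1⟩ := NF_all ((h₁ : H) : PG m)
  obtain ⟨i2, j2, l2, hn2⟩ := NF_all ((h₂ : H) : PG m)
  have e1 : psi ((h₁ : H) : PG m) = Multiplicative.ofAdd ((1 : ZMod 3), (0 : ZMod 3)) := hh₁
  have e2 : psi ((h₂ : H) : PG m) = Multiplicative.ofAdd ((0 : ZMod 3), (1 : ZMod 3)) := hh₂
  rw [hn1, psi_nf] at e1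
  rw [hn2, psi_nf] at e2
  have e1' := Multiplicative.ofAdd.injective e1
  have e2' := Multiplicative.ofAdd.injective e2
  -- reduce the powers
  have hi1 : i1 % 3 = 1 := by
    have := congrArg ZMod.val (congrArg Prod.fst e1')
    simpa [ZMod.val_natCast, show ZMod.val (1 : ZMod 3) = 1 from rfl] using this
  have hj1 : j1 % 3 = 0 := by
    have := congrArg ZMod.val (congrArg Prod.snd e1')
    simpa [ZMod.val_natCast] using this
  have hi2 : i2 % 3 = 0 := by
    have := congrArg ZMod.val (congrArg Prod.fst e2')
    simpa [ZMod.val_natCast] using this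
  have hj2 : j2 % 3 = 1 := by
    have := congrArg ZMod.val (congrArg Prod.snd e2')
    simpa [ZMod.val_natCast, show ZMod.val (1 : ZMod 3) = 1 from rfl] using this
  have hcoe1 : ((h₁ : H) : PG m) = pa * pc ^ l1 := by
    rw [hn1, pow_eq_pow_mod i1 pa3, pow_eq_pow_mod j1 pb3, hi1, hj1]
    simp
  have hcoe2 : ((h₂ : H) : PG m) = pb * pc ^ l2 := by
    rw [hn2, pow_eq_pow_mod i2 pa3, pow_eq_pow_mod j2 pb3, hi2, hj2]
    simp
  -- H is commutative, so the images commute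
  have hcomm : (h₁ * h₂ : H) = h₂ * h₁ := by
    apply e.injective
    rw [_root_.map_mul, _root_.map_mul, mul_comm]
  have hcommP : ((pa : PG m) * pc ^ l1) * (pb * pc ^ l2) = (pb * pc ^ l2) * (pa * pc ^ l1) := by
    have h7 := congrArg (Subtype.val : H → PG m) hcomm
    push_cast at h7
    rw [hcoe1, hcoe2] at h7
    exact h7
  -- cancel the central factors
  have habP : (pa : PG m) * pb = pb * pa := by
    have step1 : ((pa : PG m) * pc ^ l1) * (pb * pc ^ l2) = (pa * pb) * (pc ^ l1 * pc ^ l2) := by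
      calc (pa * pc ^ l1) * (pb * pc ^ l2)
          = pa * (pc ^ l1 * pb) * pc ^ l2 := by group
        _ = pa * (pb * pc ^ l1) * pc ^ l2 := by rw [← centralpow pb l1]
        _ = (pa * pb) * (pc ^ l1 * pc ^ l2) := by group
    have step2 : ((pb : PG m) * pc ^ l2) * (pa * pc ^ l1) = (pb * pa) * (pc ^ l1 * pc ^ l2) := by
      calc (pb * pc ^ l2) * (pa * pc ^ l1)
          = pb * (pc ^ l2 * pa) * pc ^ l1 := by group
        _ = pb * (pa * pc ^ l2) * pc ^ l1 := by rw [← centralpow pa l2]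
        _ = (pb * pa) * (pc ^ l2 * pc ^ l1) := by group
        _ = (pb * pa) * (pc ^ l1 * pc ^ l2) := by
            rw [← pow_add, ← pow_add, Nat.add_comm l2 l1]
    rw [step1, step2] at hcommP
    exact mul_right_cancel hcommP
  have hone : (pc : PG m) ^ 3 ^ m = 1 := by
    have h6 := hab (m := m)
    rw [habP] at h6
    exact (left_eq_mul.mp h6)
  have hdvd := orderOf_dvd_of_pow_eq_one hone
  rw [orderOf_pc] at hdvd
  have hlt : (3 : ℕ) ^ m < 3 ^ (m + 1) := by
    have : (3:ℕ) ^ m * 1 < 3 ^ m * 3 := by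
      have : (0:ℕ) < 3 ^ m := by positivity
      omega
    simpa [pow_succ] using this
  have hle' := Nat.le_of_dvd (by positivity) hdvd
  omega

end Final

end PkAux

/-- For `k ≥ 3`, `P(k)` has order `3^k`, its center contains the subgroup generated by `c`,
which has order `3^(k-2)`, and it has rank `2`: it contains no subgroup isomorphic to
`ℤ/3 × ℤ/3 × ℤ/3`. -/
theorem Pk_properties (k : ℕ) (hk : 3 ≤ k) :
    let c : P k := PresentedGroup.of (rels := Prels k) 2
    Nat.card (P k) = 3 ^ k ∧
    Subgroup.zpowers c ≤ Subgroup.center (P k) ∧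
    Nat.card (Subgroup.zpowers c) = 3 ^ (k - 2) ∧
    ¬ ∃ H : Subgroup (P k),
        Nonempty (H ≃* Multiplicative (ZMod 3 × ZMod 3 × ZMod 3)) := by
  intro c
  obtain ⟨m, rfl⟩ : ∃ m, k = m + 3 := ⟨k - 3, by omega⟩
  refine ⟨?_, ?_, ?_, ?_⟩
  · exact PkAux.card_PG (m := m)
  · have hcen : (PkAux.pc : PkAux.PG m) ∈ Subgroup.center (PkAux.PG m) :=
      Subgroup.mem_center_iff.mpr fun g => PkAux.central g
    exact Subgroup.zpowers_le.mpr hcen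
  · show Nat.card (Subgroup.zpowers (PkAux.pc : PkAux.PG m)) = 3 ^ (m + 3 - 2)
    rw [Nat.card_zpowers, PkAux.orderOf_pc]
    congr 1
  · rintro ⟨H, ⟨e⟩⟩
    exact PkAux.no_big_abelian H e
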